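/- Dirichlet form comparison on two sites: let Λ = {0,1}, γ(n) := ν_Λ^N[η₀=n], 𝒟̃(φ,φ) := ∑_{n=1}^N γ(n) c(n) (φ(n−1)−φ(n))² and 𝒟(φ,φ) := ∑_{n=1}^N min(γ(n),γ(n−1)) (φ(n−1)−φ(n))². If A₀⁻¹k ≤ c(k) ≤ A₀k for k ≥ 1, then there is B₀ > 0 (depending only on A₀) such that N·𝒟(φ,φ) ≤ B₀·𝒟̃(φ,φ) for all φ : {0,…,N} → ℝ and all N ≥ 1. -/

import Mathlib

open Finset

/-- `cfact c n = c(1)⋯c(n)`, with `cfact c 0 = 1`. -/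
noncomputable def cfact (c : ℕ → ℝ) (n : ℕ) : ℝ := ∏ k ∈ Finset.range n, c (k + 1)

/-- `γ(n) = ν_{{0,1}}^N[η₀ = n]` for the two-site canonical zero-range measure. -/
noncomputable def gammaTwo (c : ℕ → ℝ) (N n : ℕ) : ℝ :=
  ((cfact c n)⁻¹ * (cfact c (N - n))⁻¹) /
    (∑ k ∈ Finset.range (N + 1), (cfact c k)⁻¹ * (cfact c (N - k))⁻¹)

lemma cfact_pos (c : ℕ → ℝ) (hcpos : ∀ k, 0 < k → 0 < c k) (n : ℕ) :
    0 < cfact c n := by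
  apply Finset.prod_pos
  intro k _
  exact hcpos _ (Nat.succ_pos k)

lemma Zsum_pos (c : ℕ → ℝ) (hcpos : ∀ k, 0 < k → 0 < c k) (N : ℕ) :
    0 < ∑ k ∈ Finset.range (N + 1), (cfact c k)⁻¹ * (cfact c (N - k))⁻¹ := by
  apply Finset.sum_pos
  · intro k _
    have h1 := cfact_pos c hcpos k
    have h2 := cfact_pos c hcpos (N - k)
    positivity
  · exact ⟨0, Finset.mem_range.mpr (Nat.succ_pos N)⟩

lemma gammaTwo_pos (c : ℕ → ℝ) (hcpos : ∀ k, 0 < k → 0 < c k) (N n : ℕ) :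
    0 < gammaTwo c N n := by
  apply div_pos
  · have h1 := cfact_pos c hcpos n
    have h2 := cfact_pos c hcpos (N - n)
    positivity
  · exact Zsum_pos c hcpos N

lemma gammaTwo_mul_c (c : ℕ → ℝ) (hcpos : ∀ k, 0 < k → 0 < c k) (N m : ℕ) (hm : m < N) :
    gammaTwo c N (m + 1) * c (m + 1) = gammaTwo c N m * c (N - m) := by
  have hNm : N - m = (N - (m + 1)) + 1 := by omega
  have h1 : cfact c (m + 1) = cfact c m * c (m + 1) := Finset.prod_range_succ _ _
  have h2 : cfact c (N - m) = cfact c (N - (m + 1)) * c (N - m) := by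
    rw [hNm, cfact, Finset.prod_range_succ, ← hNm]
    rfl
  have p1 := cfact_pos c hcpos m
  have p2 := cfact_pos c hcpos (N - (m + 1))
  have pc1 : 0 < c (m + 1) := hcpos _ (Nat.succ_pos m)
  have pc2 : 0 < c (N - m) := hcpos _ (by omega)
  have key : (cfact c (m + 1))⁻¹ * (cfact c (N - (m + 1)))⁻¹ * c (m + 1)
      = (cfact c m)⁻¹ * (cfact c (N - m))⁻¹ * c (N - m) := by
    rw [h1, h2]
    field_simp
  unfold gammaTwo
  rw [div_mul_eq_mul_div, div_mul_eq_mul_div, key]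

/-- Dirichlet form comparison on two sites: `N·𝒟(φ,φ) ≤ B₀·𝒟̃(φ,φ)`. -/
theorem dirichlet_form_comparison (c : ℕ → ℝ) (hc0 : c 0 = 0)
    (hcpos : ∀ k, 0 < k → 0 < c k)
    (A₀ : ℝ) (hA₀ : 1 ≤ A₀)
    (hgrow : ∀ k : ℕ, 1 ≤ k → A₀⁻¹ * k ≤ c k ∧ c k ≤ A₀ * k) :
    ∃ B₀ : ℝ, 0 < B₀ ∧ ∀ N : ℕ, 1 ≤ N → ∀ φ : ℕ → ℝ,
      (N : ℝ) * ∑ n ∈ Finset.Icc 1 N,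
          min (gammaTwo c N n) (gammaTwo c N (n - 1)) * (φ (n - 1) - φ n) ^ 2 ≤
        B₀ * ∑ n ∈ Finset.Icc 1 N,
          gammaTwo c N n * c n * (φ (n - 1) - φ n) ^ 2 := by
  have hA₀pos : (0:ℝ) < A₀ := lt_of_lt_of_le one_pos hA₀
  refine ⟨2 * A₀, by positivity, ?_⟩
  intro N hN φ
  rw [Finset.mul_sum, Finset.mul_sum]
  apply Finset.sum_le_sum
  intro n hn
  obtain ⟨hn1, hnN⟩ := Finset.mem_Icc.mp hn
  obtain ⟨m, rfl⟩ : ∃ m, n = m + 1 := ⟨n - 1, by omega⟩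
  have hm : m < N := by omega
  simp only [Nat.add_sub_cancel]
  have hw : (0:ℝ) ≤ (φ m - φ (m + 1)) ^ 2 := sq_nonneg _
  rw [← mul_assoc, ← mul_assoc, mul_comm ((2:ℝ) * A₀)]
  apply mul_le_mul_of_nonneg_right _ hw
  -- key termwise bound: N * min(γ(m+1), γ m) ≤ γ(m+1) c(m+1) * (2 A₀)
  have hγ1 := gammaTwo_pos c hcpos N (m + 1)
  have hγ0 := gammaTwo_pos c hcpos N m
  have hid := gammaTwo_mul_c c hcpos N m hm
  rcases le_or_gt (N : ℝ) (2 * (m + 1)) with hcase | hcase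
  · -- c(m+1) ≥ A₀⁻¹ (m+1) ≥ N/(2A₀)
    have hc := (hgrow (m + 1) (by omega)).1
    have hN2A : (N : ℝ) ≤ 2 * A₀ * c (m + 1) := by
      have : A₀⁻¹ * (N : ℝ) ≤ 2 * c (m + 1) := by
        calc A₀⁻¹ * (N : ℝ) ≤ A₀⁻¹ * (2 * (m + 1)) := by
              apply mul_le_mul_of_nonneg_left _ (by positivity)
              exact_mod_cast hcase
          _ = 2 * (A₀⁻¹ * ((m + 1 : ℕ) : ℝ)) := by push_cast; ring
          _ ≤ 2 * c (m + 1) := by linarith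
      calc (N : ℝ) = A₀ * (A₀⁻¹ * N) := by field_simp
        _ ≤ A₀ * (2 * c (m + 1)) := by
            apply mul_le_mul_of_nonneg_left this (le_of_lt hA₀pos)
        _ = 2 * A₀ * c (m + 1) := by ring
    calc (N : ℝ) * min (gammaTwo c N (m + 1)) (gammaTwo c N m)
        ≤ (2 * A₀ * c (m + 1)) * gammaTwo c N (m + 1) := by
          apply mul_le_mul hN2A (min_le_left _ _) (le_min hγ1.le hγ0.le)
            (mul_nonneg (by positivity) (hcpos _ (Nat.succ_pos m)).le)
      _ = gammaTwo c N (m + 1) * c (m + 1) * (2 * A₀) := by ring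
  · -- c(N-m) ≥ A₀⁻¹ (N-m) ≥ N/(2A₀)
    have hNm1 : 1 ≤ N - m := by omega
    have hc := (hgrow (N - m) hNm1).1
    have hcast : ((N - m : ℕ) : ℝ) = (N : ℝ) - m := by
      have : m ≤ N := le_of_lt hm
      push_cast [Nat.cast_sub this]; ring
    have hNhalf : (N : ℝ) ≤ 2 * ((N : ℝ) - m) := by
      have : 2 * (m + 1) ≤ (N:ℝ) := le_of_lt hcase
      linarith
    have hN2A : (N : ℝ) ≤ 2 * A₀ * c (N - m) := by
      have h1 : A₀⁻¹ * (N : ℝ) ≤ 2 * c (N - m) := by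
        calc A₀⁻¹ * (N : ℝ) ≤ A₀⁻¹ * (2 * ((N:ℝ) - m)) := by
              apply mul_le_mul_of_nonneg_left hNhalf (by positivity)
          _ = 2 * (A₀⁻¹ * ((N - m : ℕ) : ℝ)) := by rw [hcast]; ring
          _ ≤ 2 * c (N - m) := by linarith
      calc (N : ℝ) = A₀ * (A₀⁻¹ * N) := by field_simp
        _ ≤ A₀ * (2 * c (N - m)) := by
            apply mul_le_mul_of_nonneg_left h1 (le_of_lt hA₀pos)
        _ = 2 * A₀ * c (N - m) := by ring
    calc (N : ℝ) * min (gammaTwo c N (m + 1)) (gammaTwo c N m)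
        ≤ (2 * A₀ * c (N - m)) * gammaTwo c N m := by
          apply mul_le_mul hN2A (min_le_right _ _) (le_min hγ1.le hγ0.le)
            (mul_nonneg (by positivity) (hcpos _ (by omega)).le)
      _ = gammaTwo c N m * c (N - m) * (2 * A₀) := by ring
      _ = gammaTwo c N (m + 1) * c (m + 1) * (2 * A₀) := by rw [← hid]
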